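/- Let G(T) be the threshold graph on {1,…,n} with construction sequence T and Laplacian matrix L. If two distinct vertices i < j satisfy d(i) = d(j), then the vector e_i − e_j (where e_k is the k-th standard basis vector of ℝ^n) is an eigenvector of L: L·(e_i − e_j) = (d(i) + a)·(e_i − e_j), where a = 1 if i and j are adjacent in G(T) and a = 0 otherwise. -/

import Mathlib

open Finset Matrix Polynomial

/-- The threshold graph on `Fin n` (vertex `i` of the paper corresponds to `⟨i-1, _⟩ : Fin n`)
with construction sequence `T` : two distinct vertices are adjacent iff the later one
(in the construction order) was added by a join operation. -/
def thresholdGraph (n : ℕ) (T : Fin n → Bool) : SimpleGraph (Fin n) where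
  Adj i j := i ≠ j ∧ T (max i j) = true
  symm := by
    constructor
    intro i j h
    exact ⟨h.1.symm, by rw [max_comm]; exact h.2⟩
  loopless := by
    constructor
    intro i h
    exact h.1 rfl

instance thresholdGraph.instDecidableRelAdj (n : ℕ) (T : Fin n → Bool) :
    DecidableRel (thresholdGraph n T).Adj :=
  fun i j => decidable_of_iff (i ≠ j ∧ T (max i j) = true) Iff.rfl

theorem thresholdGraph_key (n : ℕ) (T : Fin n → Bool) (i j : Fin n) (hij : i < j)
    (hdeg : (thresholdGraph n T).degree i = (thresholdGraph n T).degree j) :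
    ∀ k, k ≠ i → k ≠ j →
      ((thresholdGraph n T).Adj i k ↔ (thresholdGraph n T).Adj j k) := by
  set G := thresholdGraph n T with hG
  have hne : i ≠ j := ne_of_lt hij
  set a : Fin n → ℕ := fun k => if G.Adj i k then 1 else 0 with ha
  set b : Fin n → ℕ := fun k => if G.Adj j k then 1 else 0 with hb
  have hdi : G.degree i = ∑ k : Fin n, a k := by
    rw [SimpleGraph.degree, SimpleGraph.neighborFinset_eq_filter, Finset.card_filter]
  have hdj : G.degree j = ∑ k : Fin n, b k := by
    rw [SimpleGraph.degree, SimpleGraph.neighborFinset_eq_filter, Finset.card_filter]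
  set s : Finset (Fin n) := (Finset.univ.erase i).erase j with hs
  have hji : j ∈ Finset.univ.erase i := Finset.mem_erase.2 ⟨hne.symm, Finset.mem_univ j⟩
  have hsum_a : ∑ k : Fin n, a k = ∑ k ∈ s, a k + a j := by
    rw [Finset.sum_erase_add _ _ hji, Finset.sum_erase _ (by simp [ha, G.irrefl])]
  have hij' : i ∈ Finset.univ.erase j := Finset.mem_erase.2 ⟨hne, Finset.mem_univ i⟩
  have hsum_b : ∑ k : Fin n, b k = ∑ k ∈ s, b k + b i := by
    rw [hs, Finset.erase_right_comm, Finset.sum_erase_add _ _ hij',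
      Finset.sum_erase _ (by simp [hb, G.irrefl])]
  have haj : a j = b i := by
    simp only [ha, hb, hG, thresholdGraph]
    simp [hne, hne.symm, max_comm]
  have hsum : ∑ k ∈ s, a k = ∑ k ∈ s, b k := by
    have := hdeg
    rw [hdi, hdj, hsum_a, hsum_b, haj] at this
    omega
  have hmem : ∀ k ∈ s, k ≠ i ∧ k ≠ j := by
    intro k hk
    simp only [hs, Finset.mem_erase] at hk
    exact ⟨hk.2.1, hk.1⟩
  have key : ∀ k ∈ s, a k = b k := by
    by_cases hTj : T j = true
    · -- a k ≤ b k pointwise on s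
      have hle : ∀ k ∈ s, a k ≤ b k := by
        intro k hk
        obtain ⟨hki, hkj⟩ := hmem k hk
        simp only [ha, hb]
        split_ifs with h1 h2
        · rfl
        · exfalso; apply h2
          refine ⟨hkj.symm, ?_⟩
          rcases lt_or_gt_of_ne (Ne.symm hkj) with hlt | hgt
          · rw [max_eq_right hlt.le]
            have hik := h1.2
            rwa [max_eq_right (hij.trans hlt).le] at hik
          · rw [max_eq_left hgt.le]; exact hTj
        · omega
        · rfl
      exact fun k hk => ((Finset.sum_eq_sum_iff_of_le hle).1 hsum k hk)
    · have hle : ∀ k ∈ s, b k ≤ a k := by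
        intro k hk
        obtain ⟨hki, hkj⟩ := hmem k hk
        simp only [ha, hb]
        split_ifs with h1 h2
        · rfl
        · exfalso
          obtain ⟨-, hTm⟩ := h1
          rcases lt_or_gt_of_ne (Ne.symm hkj) with hlt | hgt
          · rw [max_eq_right hlt.le] at hTm
            apply h2
            refine ⟨hki.symm, ?_⟩
            rwa [max_eq_right (hij.trans hlt).le]
          · rw [max_eq_left hgt.le] at hTm; exact hTj hTm
        · omega
        · rfl
      exact fun k hk => ((Finset.sum_eq_sum_iff_of_le hle).1 hsum.symm k hk).symm
  intro k hki hkj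
  have hks : k ∈ s := by simp [hs, hki, hkj]
  have := key k hks
  simp only [ha, hb] at this
  constructor <;> intro h <;> by_contra hc <;> simp [h, hc] at this

/-- if two distinct vertices `i < j` of a threshold graph have the same degree,
then `e_i − e_j` is an eigenvector of the Laplacian with eigenvalue `d(i) + a`, where `a = 1`
if `i` and `j` are adjacent and `a = 0` otherwise. -/
theorem lapMatrix_single_sub_single_thresholdGraph (n : ℕ) (T : Fin n → Bool) (hn : 0 < n)
    (hT1 : T ⟨0, hn⟩ = false) (i j : Fin n) (hij : i < j)
    (hdeg : (thresholdGraph n T).degree i = (thresholdGraph n T).degree j) :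
    (thresholdGraph n T).lapMatrix ℝ *ᵥ (Pi.single i 1 - Pi.single j 1) =
      (((thresholdGraph n T).degree i : ℝ) +
          (if (thresholdGraph n T).Adj i j then 1 else 0)) •
        (Pi.single i 1 - Pi.single j 1) := by
  set G := thresholdGraph n T with hG
  have hne : i ≠ j := ne_of_lt hij
  have key := thresholdGraph_key n T i j hij hdeg
  funext k
  rw [SimpleGraph.lapMatrix_mulVec_apply]
  have hsum : ∑ u ∈ G.neighborFinset k, ((Pi.single i 1 - Pi.single j 1 : Fin n → ℝ)) u =
      (if G.Adj k i then (1:ℝ) else 0) - (if G.Adj k j then (1:ℝ) else 0) := by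
    simp only [Pi.sub_apply, Finset.sum_sub_distrib]
    rw [Finset.sum_pi_single' i (1:ℝ), Finset.sum_pi_single' j (1:ℝ)]
    simp [SimpleGraph.mem_neighborFinset]
  rw [hsum]
  simp only [Pi.smul_apply, Pi.sub_apply, Pi.single_apply, smul_eq_mul]
  rcases eq_or_ne k i with h | hki
  · subst h
    simp only [if_pos rfl, if_neg hne, SimpleGraph.irrefl, if_false]
    by_cases hadj : G.Adj k j <;> simp [← hG, hadj] <;> ring
  · rcases eq_or_ne k j with h | hkj
    · subst h
      simp only [if_pos rfl, if_neg hki, SimpleGraph.irrefl, if_false, hdeg]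
      by_cases hadj : G.Adj i k
      · have h2 : G.Adj k i := (G.adj_comm k i).mpr hadj
        simp [← hG, hadj, h2] <;> ring
      · have h2 : ¬ G.Adj k i := fun hc => hadj ((G.adj_comm k i).mp hc)
        simp [← hG, hadj, h2] <;> ring
    · have hik : G.Adj k i ↔ G.Adj k j := by
        rw [G.adj_comm k i, G.adj_comm k j]
        exact key k hki hkj
      rw [if_neg hki, if_neg hkj]
      by_cases h : G.Adj k i
      · rw [if_pos h, if_pos (hik.mp h)]; ring
      · rw [if_neg h, if_neg (fun hc => h (hik.mpr hc))]; ring
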